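/- For all complex numbers z₃, z₄ ∈ ℂ and every θ ∈ ℝ: |e^{iθ}·conj(z₄) − z₃|² + |e^{i(π+θ)}·conj(z₃) − z₄|² ≥ (1/2)·(|z₃| + |z₄|)², and consequently the left-hand side is at least (1/2)·(|z₃|² + |z₄|²). (This is the key displacement estimate showing that in Wilking's example M⁶ = (S³ × ℝ⁴)/Pin(2), the displacement of the nontrivial deck transformation at the point [(z₁, z₂, z₃, z₄)] is at least (√2/2)·√(|z₃|² + |z₄|²), so that the infinite rescaled covering spectrum of M⁶ is nontrivial.) -/

import Mathlib

open Complex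

/-- The key displacement estimate in Wilking's example
`M⁶ = (S³ × ℝ⁴)/Pin(2)`: for all `z₃ z₄ ∈ ℂ` and `θ ∈ ℝ`,
`|e^{iθ} z̄₄ − z₃|² + |e^{i(π+θ)} z̄₃ − z₄|² ≥ (1/2)(|z₃| + |z₄|)²`, and
consequently the left-hand side is at least `(1/2)(|z₃|² + |z₄|²)`. -/
theorem wilking_displacement_estimate (z₃ z₄ : ℂ) (θ : ℝ) :
    (1 / 2) * (‖z₃‖ + ‖z₄‖) ^ 2 ≤
        ‖Complex.exp (θ * Complex.I) * (starRingEnd ℂ) z₄ - z₃‖ ^ 2 +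
          ‖Complex.exp ((Real.pi + θ) * Complex.I) * (starRingEnd ℂ) z₃ - z₄‖ ^ 2 ∧
      (1 / 2) * (‖z₃‖ ^ 2 + ‖z₄‖ ^ 2) ≤
        ‖Complex.exp (θ * Complex.I) * (starRingEnd ℂ) z₄ - z₃‖ ^ 2 +
          ‖Complex.exp ((Real.pi + θ) * Complex.I) * (starRingEnd ℂ) z₃ - z₄‖ ^ 2 := by
  set w := Complex.exp (θ * Complex.I) with hw
  have hexp : Complex.exp ((Real.pi + θ) * Complex.I) = -w := by
    rw [hw, show ((Real.pi : ℂ) + (θ : ℂ)) * Complex.I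
        = Real.pi * Complex.I + θ * Complex.I by ring,
      Complex.exp_add, Complex.exp_pi_mul_I]
    ring
  have hwnorm : Complex.normSq w = 1 := by
    have := Complex.norm_exp_ofReal_mul_I θ
    rw [← Complex.sq_norm, ← hw] at *
    rw [this]; norm_num
  have key : ‖w * (starRingEnd ℂ) z₄ - z₃‖ ^ 2 +
      ‖Complex.exp ((Real.pi + θ) * Complex.I) * (starRingEnd ℂ) z₃ - z₄‖ ^ 2 =
      2 * (‖z₃‖ ^ 2 + ‖z₄‖ ^ 2) := by
    rw [hexp]
    have h1 : -w * (starRingEnd ℂ) z₃ - z₄ = -(w * (starRingEnd ℂ) z₃ + z₄) := by ring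
    rw [h1, norm_neg, Complex.sq_norm, Complex.sq_norm, Complex.sq_norm, Complex.sq_norm,
      Complex.normSq_sub, Complex.normSq_add, Complex.normSq_mul, Complex.normSq_mul,
      hwnorm, Complex.normSq_conj, Complex.normSq_conj]
    have h2 : (w * (starRingEnd ℂ) z₄ * (starRingEnd ℂ) z₃).re =
        (w * (starRingEnd ℂ) z₃ * (starRingEnd ℂ) z₄).re := by ring_nf
    rw [h2]; ring
  constructor
  · rw [key]
    nlinarith [sq_nonneg (‖z₃‖ - ‖z₄‖)]
  · rw [key]
    nlinarith [sq_nonneg (‖z₃‖), sq_nonneg (‖z₄‖)]
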